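/- arXiv:1605.02124 — 2 statements merged into one kernel-verified Lean document; each statement's English description precedes it below -/
import Mathlib

section
/- For all integers k ≥ 1 and Δ ≥ 3, the graph G obtained from a tree T of order k with maximum degree less than Δ by attaching Δ − d_T(v) pendant leaves to each vertex v of T satisfies γ_c(G) = k and F_c(G) = k(Δ − 2) + 2. -/
open SimpleGraph

variable {V : Type*}

/-- One step of the (zero) forcing process: a colored vertex with exactly one
uncolored neighbor forces that neighbor to become colored. -/
def zfStep (G : SimpleGraph V) (S : Set V) : Set V :=
  S ∪ {w | ∃ v ∈ S, G.neighborSet v \ S = {w}}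

/-- `S` is a forcing set if iterating the forcing process colors all vertices. -/
def IsForcingSet (G : SimpleGraph V) (S : Set V) : Prop :=
  ∃ n : ℕ, (zfStep G)^[n] S = Set.univ

/-- A connected forcing set: a forcing set inducing a connected subgraph. -/
def IsConnForcingSet (G : SimpleGraph V) (S : Set V) : Prop :=
  IsForcingSet G S ∧ (G.induce S).Connected

/-- The forcing number `F(G)`. -/
noncomputable def forcingNumber (G : SimpleGraph V) : ℕ :=
  sInf (Set.ncard '' {S : Set V | IsForcingSet G S})

/-- The connected forcing number `F_c(G)`. -/
noncomputable def connForcingNumber (G : SimpleGraph V) : ℕ :=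
  sInf (Set.ncard '' {S : Set V | IsConnForcingSet G S})

/-- A connected dominating set: every vertex outside `D` has a neighbor in `D`,
and `D` induces a connected subgraph. -/
def IsConnDomSet (G : SimpleGraph V) (D : Set V) : Prop :=
  (∀ v ∉ D, ∃ u ∈ D, G.Adj u v) ∧ (G.induce D).Connected

/-- The connected domination number `γ_c(G)`. -/
noncomputable def connDomNumber (G : SimpleGraph V) : ℕ :=
  sInf (Set.ncard '' {D : Set V | IsConnDomSet G D})

/-- The graph obtained from `T` by attaching `Δ - deg_T v` pendant leaves to
each vertex `v` of `T`. -/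
def attachLeaves {W : Type*} [Fintype W] (T : SimpleGraph W)
    [DecidableRel T.Adj] (Δ : ℕ) :
    SimpleGraph (W ⊕ (Σ v : W, Fin (Δ - T.degree v))) where
  Adj a b :=
    match a, b with
    | Sum.inl u, Sum.inl v => T.Adj u v
    | Sum.inl u, Sum.inr p => u = p.1
    | Sum.inr p, Sum.inl v => p.1 = v
    | Sum.inr _, Sum.inr _ => False
  symm := by
    constructor
    rintro (u | p) (v | q) h
    · exact T.adj_symm h
    · exact h.symm
    · exact h.symm
    · exact h
  loopless := by
    constructor
    rintro (u | p) h
    · exact T.ne_of_adj h rfl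
    · exact h

section Aux
variable {W : Type*} [Fintype W] (T : SimpleGraph W) [DecidableRel T.Adj] (Δ : ℕ)

abbrev alV (T : SimpleGraph W) [DecidableRel T.Adj] (Δ : ℕ) :=
  W ⊕ (Σ v : W, Fin (Δ - T.degree v))

lemma al_adj_inr {p : Σ v : W, Fin (Δ - T.degree v)} {x : alV T Δ} :
    (attachLeaves T Δ).Adj (Sum.inr p) x ↔ x = Sum.inl p.1 := by
  cases x with
  | inl v =>
    constructor
    · intro h; exact congrArg Sum.inl (h : p.1 = v).symm
    · intro h; cases h; exact (rfl : p.1 = p.1)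
  | inr q =>
    constructor
    · intro h; exact absurd h not_false
    · intro h; simp at h

lemma al_neighborSet_inr (p : Σ v : W, Fin (Δ - T.degree v)) :
    (attachLeaves T Δ).neighborSet (Sum.inr p) = {Sum.inl p.1} := by
  ext x; exact al_adj_inr T Δ

lemma al_deg_lt (hmax : T.maxDegree < Δ) (v : W) : T.degree v < Δ :=
  lt_of_le_of_lt (T.degree_le_maxDegree v) hmax

lemma al_card {k : ℕ} (hT : T.IsTree) (hcard : Fintype.card W = k) (hk : 1 ≤ k)
    (hmax : T.maxDegree < Δ) :
    Fintype.card (alV T Δ) = k * (Δ - 1) + 2 := by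
  have hsum : ∑ v : W, (Δ - T.degree v) + ∑ v : W, T.degree v = k * Δ := by
    rw [← Finset.sum_add_distrib]
    have : ∀ v : W, (Δ - T.degree v) + T.degree v = Δ := fun v =>
      Nat.sub_add_cancel (le_of_lt (al_deg_lt T Δ hmax v))
    simp only [this, Finset.sum_const, Finset.card_univ, hcard, smul_eq_mul]
  have hdeg : ∑ v : W, T.degree v = 2 * (k - 1) := by
    rw [T.sum_degrees_eq_twice_card_edges]
    have := hT.card_edgeFinset
    rw [hcard] at this
    omega
  have hV : Fintype.card (alV T Δ) = k + ∑ v : W, (Δ - T.degree v) := by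
    simp [alV, Fintype.card_sum, Fintype.card_sigma, hcard]
  have hmul1 : k * (Δ - 1) + k * 1 = k * Δ := by
    rw [← Nat.mul_add]; congr 1; omega
  omega

lemma al_induce_connected (hT : T.IsTree) (S : Set (alV T Δ))
    (hinl : ∀ v : W, Sum.inl v ∈ S) :
    ((attachLeaves T Δ).induce S).Connected := by
  have hW : Nonempty W := hT.isConnected.nonempty
  let φ : T →g (attachLeaves T Δ).induce S :=
    ⟨fun v => ⟨Sum.inl v, hinl v⟩, fun {a b} h => h⟩
  have key : ∀ x : ↥S, ∃ v : W,
      ((attachLeaves T Δ).induce S).Reachable x ⟨Sum.inl v, hinl v⟩ := by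
    rintro ⟨(v | p), hx⟩
    · exact ⟨v, Reachable.refl _⟩
    · exact ⟨p.1, Adj.reachable (rfl : p.1 = p.1)⟩
  have hne : Nonempty ↥S := ⟨⟨Sum.inl (Classical.arbitrary W), hinl _⟩⟩
  refine ⟨fun x y => ?_⟩
  obtain ⟨v, hv⟩ := key x
  obtain ⟨u, hu⟩ := key y
  exact hv.trans (((hT.isConnected.preconnected v u).map φ).trans hu.symm)

lemma al_leaf_step {S : Set (alV T Δ)} (hconn : ((attachLeaves T Δ).induce S).Connected)
    {p : Σ v : W, Fin (Δ - T.degree v)} (hp : Sum.inr p ∈ S) {y : alV T Δ} (hy : y ∈ S)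
    (hne : y ≠ Sum.inr p) : Sum.inl p.1 ∈ S := by
  obtain ⟨ω⟩ := hconn.preconnected ⟨Sum.inr p, hp⟩ ⟨y, hy⟩
  cases ω with
  | nil => exact absurd rfl hne
  | @cons _ b _ h q =>
    have hb : (b : alV T Δ) = Sum.inl p.1 := (al_adj_inr T Δ).mp h
    exact hb ▸ b.2

lemma al_haslf (hmax : T.maxDegree < Δ) (v : W) : 0 < Δ - T.degree v :=
  Nat.sub_pos_of_lt (al_deg_lt T Δ hmax v)

lemma al_connDom {k : ℕ} (hT : T.IsTree) (hcard : Fintype.card W = k) (hk : 1 ≤ k)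
    (hΔ : 3 ≤ Δ) (hmax : T.maxDegree < Δ) :
    connDomNumber (attachLeaves T Δ) = k := by
  classical
  set G := attachLeaves T Δ with hG
  have hW : Nonempty W := hT.isConnected.nonempty
  set D0 : Set (alV T Δ) := Set.range Sum.inl with hD0
  have hD0card : D0.ncard = k := by
    rw [hD0, ← Set.image_univ, Set.ncard_image_of_injective _ Sum.inl_injective,
      Set.ncard_univ, Nat.card_eq_fintype_card, hcard]
  have hD0mem : IsConnDomSet G D0 := by
    constructor
    · rintro (v | p) hv
      · exact absurd ⟨v, rfl⟩ hv
      · exact ⟨Sum.inl p.1, ⟨p.1, rfl⟩, (rfl : p.1 = p.1)⟩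
    · exact al_induce_connected T Δ hT _ (fun v => ⟨v, rfl⟩)
  -- lower bound: any connected dominating set contains all inl's
  have hlb : ∀ D : Set (alV T Δ), IsConnDomSet G D → k ≤ D.ncard := by
    intro D hD
    have hsub : D0 ⊆ D := by
      rintro x ⟨v, rfl⟩
      by_contra hv
      -- every leaf of every vertex w with inl w ∉ D is in D
      have hleafmem : ∀ p : Σ w : W, Fin (Δ - T.degree w), Sum.inl p.1 ∉ D → Sum.inr p ∈ D := by
        intro p hpw
        by_contra hpD
        obtain ⟨u, hu, hadj⟩ := hD.1 (Sum.inr p) hpD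
        have := (G.adj_symm hadj)
        rw [hG, al_adj_inr T Δ] at this
        exact hpw (this ▸ hu)
      by_cases hex : ∃ w : W, Sum.inl w ∈ D
      · obtain ⟨w, hw⟩ := hex
        have hl : Sum.inr ⟨v, ⟨0, al_haslf T Δ hmax v⟩⟩ ∈ D := hleafmem _ hv
        have := al_leaf_step T Δ hD.2 hl hw (by simp)
        exact hv this
      · push_neg at hex
        -- find two distinct leaves in D
        obtain ⟨ℓ1, ℓ2, h12, hm1, hm2⟩ :
            ∃ ℓ1 ℓ2 : Σ w : W, Fin (Δ - T.degree w),
              Sum.inr ℓ1 ≠ Sum.inr ℓ2 ∧ (Sum.inr ℓ1 : alV T Δ) ∈ D ∧ Sum.inr ℓ2 ∈ D := by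
          by_cases hk1 : ∃ w w' : W, w ≠ w'
          · obtain ⟨w, w', hww⟩ := hk1
            refine ⟨⟨w, ⟨0, al_haslf T Δ hmax w⟩⟩, ⟨w', ⟨0, al_haslf T Δ hmax w'⟩⟩,
              ?_, hleafmem _ (hex w), hleafmem _ (hex w')⟩
            simp [hww]
          · push_neg at hk1
            -- all W equal: v has Δ ≥ 3 leaves since degree v = 0
            have hdeg0 : T.degree v = 0 := by
              by_contra h0
              obtain ⟨u, hu⟩ := Finset.card_pos.mp (Nat.pos_of_ne_zero h0)
              exact T.ne_of_adj ((T.mem_neighborFinset v u).mp hu).symm (hk1 u v)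
            have h2 : (1 : ℕ) < Δ - T.degree v := by omega
            refine ⟨⟨v, ⟨0, by omega⟩⟩, ⟨v, ⟨1, by omega⟩⟩, ?_,
              hleafmem _ (hex v), hleafmem _ (hex v)⟩
            simp
        have := al_leaf_step T Δ hD.2 hm1 hm2 (Ne.symm h12)
        exact hex _ this
    calc k = D0.ncard := hD0card.symm
    _ ≤ D.ncard := Set.ncard_le_ncard hsub (Set.toFinite D)
  apply le_antisymm
  · exact Nat.sInf_le ⟨D0, hD0mem, hD0card⟩
  · exact le_csInf ⟨k, D0, hD0mem, hD0card⟩ (by rintro b ⟨D', hD', rfl⟩; exact hlb D' hD')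


lemma al_two_leaves {S : Set (alV T Δ)} {p q : Σ v : W, Fin (Δ - T.degree v)}
    (hpq : p ≠ q) (hbase : p.1 = q.1) (hp : Sum.inr p ∉ S) (hq : Sum.inr q ∉ S) :
    ¬ IsForcingSet (attachLeaves T Δ) S := by
  have key : ∀ n, Sum.inr p ∉ (zfStep (attachLeaves T Δ))^[n] S ∧
      Sum.inr q ∉ (zfStep (attachLeaves T Δ))^[n] S := by
    intro n
    induction n with
    | zero => exact ⟨hp, hq⟩
    | succ n ih =>
      rw [Function.iterate_succ_apply']
      set X := (zfStep (attachLeaves T Δ))^[n] S with hX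
      have main : ∀ (r s : Σ v : W, Fin (Δ - T.degree v)), r ≠ s → r.1 = s.1 →
          Sum.inr r ∉ X → Sum.inr s ∉ X →
          Sum.inr r ∉ zfStep (attachLeaves T Δ) X := by
        intro r s hrs hbase' hr hs h
        simp only [zfStep, Set.mem_union, Set.mem_setOf_eq] at h
        rcases h with h | ⟨y, hy, hNy⟩
        · exact hr h
        · have hadj : (attachLeaves T Δ).Adj y (Sum.inr r) := by
            have hmem : Sum.inr r ∈ (attachLeaves T Δ).neighborSet y \ X := by
              rw [hNy]; exact rfl
            exact hmem.1
          obtain ⟨w, rfl⟩ : ∃ w, y = Sum.inl w := by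
            cases y with
            | inl w => exact ⟨w, rfl⟩
            | inr r' => exact absurd ((al_adj_inr T Δ).mp hadj) (by simp)
          have hwr : w = r.1 := hadj
          have hs' : Sum.inr s ∈ (attachLeaves T Δ).neighborSet (Sum.inl w) \ X := by
            refine ⟨?_, hs⟩
            show w = s.1
            rw [hwr, hbase']
          rw [hNy] at hs'
          exact hrs (Sum.inr.inj hs').symm
      exact ⟨main p q hpq hbase ih.1 ih.2, main q p (Ne.symm hpq) hbase.symm ih.2 ih.1⟩
  rintro ⟨n, hn⟩
  exact (key n).1 (hn ▸ Set.mem_univ _)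

lemma al_two_nbrs (hΔ : 3 ≤ Δ) (hmax : T.maxDegree < Δ)
    (p : Σ v : W, Fin (Δ - T.degree v)) :
    ∃ x1 x2 : alV T Δ, x1 ≠ x2 ∧ (attachLeaves T Δ).Adj (Sum.inl p.1) x1 ∧
      (attachLeaves T Δ).Adj (Sum.inl p.1) x2 ∧
      x1 ∉ ({Sum.inr p, Sum.inl p.1} : Set (alV T Δ)) ∧
      x2 ∉ ({Sum.inr p, Sum.inl p.1} : Set (alV T Δ)) := by
  classical
  obtain ⟨v, i⟩ := p
  have hdv : T.degree v < Δ := al_deg_lt T Δ hmax v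
  have hcardnb : (T.neighborFinset v).card = T.degree v := rfl
  rcases Nat.lt_or_ge (T.degree v) 2 with hd | hd
  · rcases Nat.eq_zero_or_pos (T.degree v) with hd0 | hd1
    · -- no tree neighbors: Δ - deg = Δ ≥ 3 leaves
      have hcard2 : 1 < ((Finset.univ.erase i) : Finset (Fin (Δ - T.degree v))).card := by
        rw [Finset.card_erase_of_mem (Finset.mem_univ _), Finset.card_univ, Fintype.card_fin]
        omega
      obtain ⟨j1, hj1, j2, hj2, hj⟩ := Finset.one_lt_card.mp hcard2
      have hj1i : j1 ≠ i := Finset.ne_of_mem_erase hj1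
      have hj2i : j2 ≠ i := Finset.ne_of_mem_erase hj2
      refine ⟨Sum.inr ⟨v, j1⟩, Sum.inr ⟨v, j2⟩, by simp [hj], (rfl : v = v), (rfl : v = v),
        ?_, ?_⟩ <;> simp [hj1i, hj2i]
    · -- exactly one tree neighbor, and Δ - deg ≥ 2 leaves
      obtain ⟨u, hu⟩ := Finset.card_pos.mp (hcardnb ▸ hd1)
      have huv : T.Adj v u := (T.mem_neighborFinset v u).mp hu
      have hcard1 : 0 < ((Finset.univ.erase i) : Finset (Fin (Δ - T.degree v))).card := by
        rw [Finset.card_erase_of_mem (Finset.mem_univ _), Finset.card_univ, Fintype.card_fin]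
        omega
      obtain ⟨j, hjmem⟩ := Finset.card_pos.mp hcard1
      have hji : j ≠ i := Finset.ne_of_mem_erase hjmem
      refine ⟨Sum.inl u, Sum.inr ⟨v, j⟩, by simp, huv, (rfl : v = v), ?_, ?_⟩
      · simp [(T.ne_of_adj huv).symm]
      · simp [hji]
  · -- two distinct tree neighbors
    obtain ⟨u1, hu1, u2, hu2, hu⟩ := Finset.one_lt_card.mp (hcardnb ▸ hd)
    refine ⟨Sum.inl u1, Sum.inl u2, by simp [hu],
      (T.mem_neighborFinset v u1).mp hu1, (T.mem_neighborFinset v u2).mp hu2, ?_, ?_⟩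
    · simp [(T.ne_of_adj ((T.mem_neighborFinset v u1).mp hu1)).symm]
    · simp [(T.ne_of_adj ((T.mem_neighborFinset v u2).mp hu2)).symm]

lemma al_leaf_in (hΔ : 3 ≤ Δ) (hmax : T.maxDegree < Δ) {S : Set (alV T Δ)}
    (hF : IsConnForcingSet (attachLeaves T Δ) S)
    {p : Σ v : W, Fin (Δ - T.degree v)} (hp : Sum.inr p ∈ S) :
    Sum.inl p.1 ∈ S := by
  by_contra hv
  have hS : S = {Sum.inr p} := by
    refine Set.eq_singleton_iff_unique_mem.mpr ⟨hp, ?_⟩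
    intro y hy
    by_contra hne
    exact hv (al_leaf_step T Δ hF.2 hp hy hne)
  obtain ⟨x1, x2, hne12, hadj1, hadj2, hx1, hx2⟩ := al_two_nbrs T Δ hΔ hmax p
  set D : Set (alV T Δ) := {Sum.inr p, Sum.inl p.1} with hD
  have hstep1 : zfStep (attachLeaves T Δ) S = D := by
    rw [hS]
    ext x
    simp only [zfStep, Set.mem_union, Set.mem_setOf_eq, Set.mem_singleton_iff, hD,
      Set.mem_insert_iff]
    constructor
    · rintro (rfl | ⟨y, rfl, hNy⟩)
      · left; rfl
      · right
        have : x ∈ (attachLeaves T Δ).neighborSet (Sum.inr p) \ {Sum.inr p} := by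
          rw [hNy]; exact rfl
        exact (al_adj_inr T Δ).mp this.1
    · rintro (rfl | rfl)
      · left; rfl
      · right
        refine ⟨Sum.inr p, rfl, ?_⟩
        rw [al_neighborSet_inr, Set.diff_singleton_eq_self (by simp)]
  have hstep2 : zfStep (attachLeaves T Δ) D = D := by
    ext x
    simp only [zfStep, Set.mem_union, Set.mem_setOf_eq]
    constructor
    · rintro (h | ⟨y, hy, hNy⟩)
      · exact h
      · exfalso
        rcases hy with rfl | rfl
        · have hmem : x ∈ (attachLeaves T Δ).neighborSet (Sum.inr p) \ D := by
            rw [hNy]; exact rfl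
          rw [al_neighborSet_inr] at hmem
          have : x = Sum.inl p.1 := hmem.1
          exact hmem.2 (by rw [this, hD]; simp)
        · have h1 : x1 ∈ (attachLeaves T Δ).neighborSet (Sum.inl p.1) \ D := ⟨hadj1, hx1⟩
          have h2 : x2 ∈ (attachLeaves T Δ).neighborSet (Sum.inl p.1) \ D := ⟨hadj2, hx2⟩
          rw [hNy] at h1 h2
          exact hne12 (h1.trans h2.symm)
    · intro h; left; exact h
  have hiter : ∀ m : ℕ, (zfStep (attachLeaves T Δ))^[m + 1] S = D := by
    intro m
    induction m with
    | zero => simpa using hstep1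
    | succ m ih => rw [Function.iterate_succ_apply', ih, hstep2]
  obtain ⟨n, hn⟩ := hF.1
  cases n with
  | zero =>
    simp only [Function.iterate_zero_apply] at hn
    exact hv (hn ▸ Set.mem_univ _)
  | succ m =>
    rw [hiter m] at hn
    exact hx1 (hn ▸ Set.mem_univ _)


lemma al_inl_mem (hT : T.IsTree) (hΔ : 3 ≤ Δ) (hmax : T.maxDegree < Δ)
    {S : Set (alV T Δ)} (hF : IsConnForcingSet (attachLeaves T Δ) S) (v0 : W) :
    Sum.inl v0 ∈ S := by
  by_contra hv0
  classical
  have hleafS : ∀ p : Σ v : W, Fin (Δ - T.degree v), Sum.inl p.1 ∉ S → Sum.inr p ∉ S :=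
    fun p hp hmem => hp (al_leaf_in T Δ hΔ hmax hF hmem)
  set B : Set W := {v | Sum.inl v ∉ S} with hB
  have hdegB : ∀ v ∈ B, T.degree v = Δ - 1 := by
    intro v hv
    by_contra hne
    have hlt : T.degree v < Δ := al_deg_lt T Δ hmax v
    have h2 : 2 ≤ Δ - T.degree v := by
      rcases Nat.lt_or_ge (Δ - T.degree v) 2 with h | h
      · omega
      · exact h
    have h0 : (⟨v, ⟨0, by omega⟩⟩ : Σ w : W, Fin (Δ - T.degree w)) ≠ ⟨v, ⟨1, by omega⟩⟩ := by
      intro h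
      have := congrArg (fun r : Σ w : W, Fin (Δ - T.degree w) => (r.2 : ℕ)) h
      simp at this
    exact al_two_leaves T Δ h0 rfl (hleafS _ hv) (hleafS _ hv) hF.1
  have haS : ∃ a : W, Sum.inl a ∈ S := by
    obtain ⟨⟨x, hx⟩⟩ := hF.2.nonempty
    cases x with
    | inl a => exact ⟨a, hx⟩
    | inr p => exact ⟨p.1, al_leaf_in T Δ hΔ hmax hF hx⟩
  obtain ⟨a, ha⟩ := haS
  have hPa : ∀ z : W, ∃ p : T.Walk z a, p.IsPath ∧ ∀ q : T.Walk z a, q.IsPath → q = p := by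
    intro z
    obtain ⟨p, hp, hun⟩ := hT.existsUnique_path z a
    exact ⟨p, hp, hun⟩
  choose pA hpA hunA using hPa
  have hBne : B.Nonempty := ⟨v0, hv0⟩
  obtain ⟨vm, hvm, hmaxlen⟩ :=
    Set.exists_max_image B (fun z => (pA z).length) (Set.toFinite B) hBne
  have hva : vm ≠ a := fun h => hvm (h ▸ ha)
  have hnn : ¬ (pA vm).Nil := Walk.not_nil_of_ne hva
  obtain ⟨w, hvw, q, hcons⟩ := Walk.not_nil_iff.mp hnn
  have hqpath : q.IsPath ∧ vm ∉ q.support := by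
    have hh := hpA vm
    rw [hcons, Walk.cons_isPath_iff] at hh
    exact hh
  have hdeg2 : 1 < (T.neighborFinset vm).card := by
    have h := hdegB vm hvm
    show 1 < T.degree vm
    omega
  obtain ⟨u, hu, huw⟩ := Finset.exists_mem_ne hdeg2 w
  have hvmu : T.Adj vm u := (T.mem_neighborFinset vm u).mp hu
  have huvm : u ≠ vm := (T.ne_of_adj hvmu).symm
  have hwvm : w ≠ vm := (T.ne_of_adj hvw).symm
  have hunotp : u ∉ (pA vm).support := by
    intro husup
    have huq : u ∈ q.support := by
      rw [hcons, Walk.support_cons] at husup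
      rcases List.mem_cons.mp husup with h | h
      · exact absurd h huvm
      · exact h
    have hsing : (Walk.cons hvmu Walk.nil).IsPath := by
      rw [Walk.cons_isPath_iff]
      refine ⟨Walk.IsPath.nil, ?_⟩
      rw [Walk.support_nil]
      simp [Ne.symm huvm]
    have htp : (Walk.cons hvw (q.takeUntil u huq)).IsPath := by
      rw [Walk.cons_isPath_iff]
      exact ⟨(hqpath.1).takeUntil huq,
        fun hmem => hqpath.2 (Walk.support_takeUntil_subset _ huq hmem)⟩
    obtain ⟨P, hP, hPun⟩ := hT.existsUnique_path vm u
    have h1 := hPun _ hsing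
    have h2 := hPun _ htp
    have h3 := congrArg (fun r : T.Walk vm u => r.getVert 1) (h1.trans h2.symm)
    simp only [Walk.getVert_cons _ _ one_ne_zero, Nat.sub_self, Walk.getVert_zero] at h3
    exact huw h3
  have hextpath : (Walk.cons hvmu.symm (pA vm)).IsPath := by
    rw [Walk.cons_isPath_iff]
    exact ⟨hpA vm, hunotp⟩
  have hulen : (pA u).length = (pA vm).length + 1 := by
    rw [← hunA u _ hextpath, Walk.length_cons]
  have huS : Sum.inl u ∈ S := by
    by_contra huB
    have := hmaxlen u huB
    omega
  have hPV : ∀ z : W, ∃ p : T.Walk z vm, p.IsPath ∧ ∀ q : T.Walk z vm, q.IsPath → q = p := by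
    intro z
    obtain ⟨p, hp, hun⟩ := hT.existsUnique_path z vm
    exact ⟨p, hp, hun⟩
  choose pV hpV hunV using hPV
  set Z : Set W := {z | w ∈ (pV z).support} with hZ
  have hZa : a ∈ Z := by
    have hrp : (pA vm).reverse.IsPath := (hpA vm).reverse
    show w ∈ (pV a).support
    rw [← (hunV a _ hrp), Walk.support_reverse]
    apply List.mem_reverse.mpr
    rw [hcons, Walk.support_cons]
    exact List.mem_cons_of_mem _ q.start_mem_support
  have hZu : u ∉ Z := by
    have hsing : (Walk.cons hvmu.symm Walk.nil).IsPath := by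
      rw [Walk.cons_isPath_iff]
      refine ⟨Walk.IsPath.nil, ?_⟩
      rw [Walk.support_nil]
      simp [huvm]
    show w ∉ (pV u).support
    rw [← (hunV u _ hsing), Walk.support_cons, Walk.support_nil]
    simp [Ne.symm huw, hwvm]
  have hcut : ∀ z1 z2 : W, T.Adj z1 z2 → z1 ∈ Z → z2 ∉ Z → z1 = w ∧ z2 = vm := by
    intro z1 z2 hadj hz1 hz2
    have hz1nsup : z1 ∉ (pV z2).support := by
      intro hmem
      have hdrop := (hpV z2).dropUntil hmem
      have heqd := hunV z1 _ hdrop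
      apply hz2
      show w ∈ (pV z2).support
      apply Walk.support_dropUntil_subset _ hmem
      rw [heqd]
      exact hz1
    have hconsP : (Walk.cons hadj (pV z2)).IsPath := by
      rw [Walk.cons_isPath_iff]
      exact ⟨hpV z2, hz1nsup⟩
    have heq := hunV z1 _ hconsP
    have hz1w : z1 = w := by
      have hmem : w ∈ (Walk.cons hadj (pV z2)).support := by
        rw [heq]
        exact hz1
      rw [Walk.support_cons] at hmem
      rcases List.mem_cons.mp hmem with h | h
      · exact h.symm
      · exact absurd h hz2
    subst hz1w
    refine ⟨rfl, ?_⟩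
    have hs : (Walk.cons (T.adj_symm hvw) Walk.nil).IsPath := by
      rw [Walk.cons_isPath_iff]
      refine ⟨Walk.IsPath.nil, ?_⟩
      rw [Walk.support_nil]
      simp [hwvm]
    have h1 := hunV z1 _ hs
    have h2 := hunV z1 _ hconsP
    have h3 := congrArg (fun r : T.Walk z1 vm => r.getVert 1) (h2.trans h1.symm)
    simp only [Walk.getVert_cons _ _ one_ne_zero, Nat.sub_self, Walk.getVert_zero] at h3
    exact h3
  obtain ⟨ω⟩ := hF.2.preconnected ⟨Sum.inl u, huS⟩ ⟨Sum.inl a, ha⟩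
  let ι : (attachLeaves T Δ).induce S →g attachLeaves T Δ := ⟨Subtype.val, fun h => h⟩
  set ω' := ω.map ι with hω'
  have hsupS : ∀ x, x ∈ ω'.support → x ∈ S := by
    intro x hx
    rw [hω', Walk.support_map] at hx
    obtain ⟨b, hb, rfl⟩ := List.mem_map.mp hx
    exact b.2
  set C : Set (alV T Δ) := {x | Sum.elim id Sigma.fst x ∈ Z} with hC
  have hcross : ∀ {x y : alV T Δ} (Wk : (attachLeaves T Δ).Walk x y), x ∉ C → y ∈ C →
      ∃ d1 d2 : alV T Δ, (attachLeaves T Δ).Adj d1 d2 ∧ d1 ∈ Wk.support ∧ d1 ∉ C ∧ d2 ∈ C := by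
    intro x y Wk
    induction Wk with
    | nil =>
      intro hx hy
      exact absurd hy hx
    | @cons x' m y' h rest ih =>
      intro hx hy
      by_cases hm : m ∈ C
      · exact ⟨x', m, h, Walk.start_mem_support _, hx, hm⟩
      · obtain ⟨d1, d2, ha1, ha2, ha3, ha4⟩ := ih hm hy
        exact ⟨d1, d2, ha1, by rw [Walk.support_cons]; exact List.mem_cons_of_mem _ ha2, ha3, ha4⟩
  have hucC : (Sum.inl u : alV T Δ) ∉ C := hZu
  have haC : (Sum.inl a : alV T Δ) ∈ C := hZa
  obtain ⟨d1, d2, hadj, hd1sup, hd1, hd2⟩ := hcross ω' hucC haC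
  have hd1S : d1 ∈ S := hsupS d1 hd1sup
  cases d1 with
  | inl z1 =>
    cases d2 with
    | inl z2 =>
      have hTz : T.Adj z2 z1 := T.adj_symm hadj
      have hres := hcut z2 z1 hTz hd2 hd1
      exact hvm (hres.2 ▸ hd1S)
    | inr p =>
      have hzp : z1 = p.1 := hadj
      exact hd1 (show z1 ∈ Z from hzp ▸ hd2)
  | inr p =>
    cases d2 with
    | inl z2 =>
      have hzp : p.1 = z2 := hadj
      exact hd1 (show p.1 ∈ Z from hzp ▸ hd2)
    | inr q' => exact hadj


lemma al_forcing_lb {k : ℕ} (hT : T.IsTree) (hcard : Fintype.card W = k) (hk : 1 ≤ k)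
    (hΔ : 3 ≤ Δ) (hmax : T.maxDegree < Δ) {S : Set (alV T Δ)}
    (hF : IsConnForcingSet (attachLeaves T Δ) S) :
    k * (Δ - 2) + 2 ≤ S.ncard := by
  classical
  have hinj : Set.InjOn (Sum.elim id Sigma.fst) Sᶜ := by
    intro x hx y hy hxy
    obtain ⟨p, rfl⟩ : ∃ p, x = Sum.inr p := by
      cases x with
      | inl v => exact absurd (al_inl_mem T Δ hT hΔ hmax hF v) hx
      | inr p => exact ⟨p, rfl⟩
    obtain ⟨q, rfl⟩ : ∃ q, y = Sum.inr q := by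
      cases y with
      | inl v => exact absurd (al_inl_mem T Δ hT hΔ hmax hF v) hy
      | inr p => exact ⟨p, rfl⟩
    by_contra hne
    have hpq : p ≠ q := fun h => hne (congrArg Sum.inr h)
    exact al_two_leaves T Δ hpq hxy hx hy hF.1
  have hle : Sᶜ.ncard ≤ k := by
    calc Sᶜ.ncard = ((Sum.elim id Sigma.fst) '' Sᶜ).ncard :=
          (Set.ncard_image_of_injOn hinj).symm
    _ ≤ (Set.univ : Set W).ncard := Set.ncard_le_ncard (Set.subset_univ _) (Set.toFinite _)
    _ = k := by rw [Set.ncard_univ, Nat.card_eq_fintype_card, hcard]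
  have htot : S.ncard + Sᶜ.ncard = Fintype.card (alV T Δ) := by
    rw [Set.ncard_add_ncard_compl]
    exact Nat.card_eq_fintype_card
  have hcV := al_card T Δ hT hcard hk hmax
  have hmul : k * (Δ - 1) = k * (Δ - 2) + k := by
    have h2 : (Δ - 1) = (Δ - 2) + 1 := by omega
    rw [h2, Nat.mul_add, Nat.mul_one]
  omega

lemma al_connForcing_aux {k : ℕ} (hT : T.IsTree) (hcard : Fintype.card W = k) (hk : 1 ≤ k)
    (hΔ : 3 ≤ Δ) (hmax : T.maxDegree < Δ) :
    ∃ S0 : Set (alV T Δ), IsConnForcingSet (attachLeaves T Δ) S0 ∧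
      S0.ncard = k * (Δ - 2) + 2 := by
  classical
  set f : W → alV T Δ := fun v => Sum.inr ⟨v, ⟨0, al_haslf T Δ hmax v⟩⟩ with hf
  have hfinj : Function.Injective f := by
    intro v w h
    have h2 := Sum.inr.inj h
    exact congrArg Sigma.fst h2
  refine ⟨(Set.range f)ᶜ, ⟨?_, ?_⟩, ?_⟩
  · refine ⟨1, ?_⟩
    rw [Function.iterate_one]
    apply Set.eq_univ_of_forall
    intro x
    by_cases hx : x ∈ (Set.range f)ᶜ
    · exact Set.mem_union_left _ hx
    · have hx' : x ∈ Set.range f := not_not.mp hx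
      obtain ⟨v, rfl⟩ := hx'
      apply Set.mem_union_right
      show ∃ y ∈ (Set.range f)ᶜ, (attachLeaves T Δ).neighborSet y \ (Set.range f)ᶜ = {f v}
      have hinl : (Sum.inl v : alV T Δ) ∈ (Set.range f)ᶜ := by
        intro hmem
        obtain ⟨w', hw'⟩ := hmem
        rw [hf] at hw'
        exact Sum.inr_ne_inl hw'
      refine ⟨Sum.inl v, hinl, ?_⟩
      ext z
      constructor
      · rintro ⟨hadj, hz⟩
        have hz' : z ∈ Set.range f := not_not.mp hz
        obtain ⟨w', rfl⟩ := hz'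
        have hvw : v = w' := hadj
        rw [hvw]
        rfl
      · rintro rfl
        refine ⟨(rfl : v = v), ?_⟩
        intro hzS0
        exact hzS0 ⟨v, rfl⟩
  · apply al_induce_connected T Δ hT
    intro v
    intro hmem
    obtain ⟨w', hw'⟩ := hmem
    rw [hf] at hw'
    exact Sum.inr_ne_inl hw'
  · have h1 : (Set.range f).ncard = k := by
      rw [← Set.image_univ, Set.ncard_image_of_injective _ hfinj, Set.ncard_univ,
        Nat.card_eq_fintype_card, hcard]
    have htot : (Set.range f).ncard + (Set.range f)ᶜ.ncard = Fintype.card (alV T Δ) := by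
      rw [Set.ncard_add_ncard_compl]
      exact Nat.card_eq_fintype_card
    have hcV := al_card T Δ hT hcard hk hmax
    have hmul : k * (Δ - 1) = k * (Δ - 2) + k := by
      have h2 : (Δ - 1) = (Δ - 2) + 1 := by omega
      rw [h2, Nat.mul_add, Nat.mul_one]
    omega

end Aux

/-- For all integers `k ≥ 1` and `Δ ≥ 3`, the graph obtained from a tree `T` of
order `k` with maximum degree `< Δ` by attaching `Δ - deg_T v` pendant leaves to
each vertex `v` satisfies `γ_c = k` and `F_c = k(Δ-2) + 2`. -/


theorem connDomNumber_and_connForcingNumber_attachLeaves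
    {W : Type*} [Fintype W] (T : SimpleGraph W) [DecidableRel T.Adj]
    (k Δ : ℕ) (hk : 1 ≤ k) (hΔ : 3 ≤ Δ) (hT : T.IsTree)
    (hcard : Fintype.card W = k) (hmax : T.maxDegree < Δ) :
    connDomNumber (attachLeaves T Δ) = k ∧
      connForcingNumber (attachLeaves T Δ) = k * (Δ - 2) + 2 := by
  constructor
  · exact al_connDom T Δ hT hcard hk hΔ hmax
  · obtain ⟨S0, hS0, hS0card⟩ := al_connForcing_aux T Δ hT hcard hk hΔ hmax
    apply le_antisymm
    · exact Nat.sInf_le ⟨S0, hS0, hS0card⟩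
    · exact le_csInf ⟨k * (Δ - 2) + 2, S0, hS0, hS0card⟩
        (by rintro b ⟨S', hS', rfl⟩; exact al_forcing_lb T Δ hT hcard hk hΔ hmax hS')
end

section
/- For the graph G obtained by taking k ≥ 2 vertex-disjoint cycles and identifying one vertex from each cycle into a single common vertex v, the connected forcing number equals k + 1 (equivalently, equals b(G) + 1 where b(G) = k is the number of 2-connected blocks). -/
open SimpleGraph

variable {V : Type*}

/-- The graph obtained from `k` vertex-disjoint cycles, the `i`-th of length
`n i`, by identifying one vertex from each cycle into a single hub vertex.
The `i`-th cycle is represented by a path on `n i - 1` vertices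
`0, 1, …, n i - 2`, whose two endpoints are joined to the hub. -/
def wedgeOfCycles (k : ℕ) (n : Fin k → ℕ) :
    SimpleGraph (Unit ⊕ (Σ i : Fin k, Fin (n i - 1))) where
  Adj a b :=
    match a, b with
    | Sum.inl _, Sum.inl _ => False
    | Sum.inl _, Sum.inr p => (p.2 : ℕ) = 0 ∨ (p.2 : ℕ) = n p.1 - 2
    | Sum.inr p, Sum.inl _ => (p.2 : ℕ) = 0 ∨ (p.2 : ℕ) = n p.1 - 2
    | Sum.inr p, Sum.inr q =>
        p.1 = q.1 ∧ ((p.2 : ℕ) + 1 = (q.2 : ℕ) ∨ (q.2 : ℕ) + 1 = (p.2 : ℕ))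
  symm := by
    constructor
    rintro (u | p) (v | q) h
    · exact h
    · exact h
    · exact h
    · exact ⟨h.1.symm, h.2.symm⟩
  loopless := by
    constructor
    rintro (u | p) h
    · exact h
    · omega

lemma subset_zfStep (G : SimpleGraph V) (S : Set V) : S ⊆ zfStep G S :=
  Set.subset_union_left

lemma mem_zfStep_of_force {G : SimpleGraph V} {S T : Set V} {v w : V}
    (hT : T ⊆ S) (hv : v ∈ T) (h : G.neighborSet v \ T = {w}) : w ∈ zfStep G S := by
  by_cases hw : w ∈ S
  · exact Or.inl hw
  · refine Or.inr ⟨v, hT hv, ?_⟩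
    have hw' : w ∈ G.neighborSet v \ T := by rw [h]; exact rfl
    apply Set.eq_singleton_iff_unique_mem.mpr
    refine ⟨⟨hw'.1, hw⟩, fun x hx => ?_⟩
    have hx' : x ∈ G.neighborSet v \ T := ⟨hx.1, fun hxT => hx.2 (hT hxT)⟩
    rw [h] at hx'
    exact hx'

/-- For the graph obtained from `k ≥ 2` vertex-disjoint cycles (each of length
at least 3) by identifying one vertex from each cycle into a common vertex,
the connected forcing number equals `k + 1` (`= b(G) + 1`). -/
theorem connForcingNumber_wedgeOfCycles (k : ℕ) (hk : 2 ≤ k)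
    (n : Fin k → ℕ) (hn : ∀ i, 3 ≤ n i) :
    connForcingNumber (wedgeOfCycles k n) = k + 1 := by
  set W := Unit ⊕ (Σ i : Fin k, Fin (n i - 1)) with hW
  set G := wedgeOfCycles k n with hG
  -- the witness set: hub plus vertex 0 of each cycle
  set f0 : Fin k → W := fun i => Sum.inr ⟨i, ⟨0, by have := hn i; omega⟩⟩ with hf0
  set S₀ : Set W := insert (Sum.inl ()) (Set.range f0) with hS₀
  -- the progress sets
  set T : ℕ → Set W := fun t => fun x =>
    match x with
    | Sum.inl _ => True
    | Sum.inr p => (p.2 : ℕ) ≤ t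
    with hT
  have hstep : ∀ (t : ℕ) (S : Set W), T t ⊆ S → T (t + 1) ⊆ zfStep G S := by
    intro t S hTS x hx
    match x with
    | Sum.inl u => exact subset_zfStep _ _ (hTS trivial)
    | Sum.inr ⟨qi, qj⟩ =>
      have hq : (qj : ℕ) ≤ t + 1 := hx
      by_cases hle : (qj : ℕ) ≤ t
      · exact subset_zfStep _ _ (hTS hle)
      · have hqt : (qj : ℕ) = t + 1 := by omega
        have hlt : t < n qi - 1 := by have := qj.isLt; omega
        have hv : (Sum.inr ⟨qi, ⟨t, hlt⟩⟩ : W) ∈ T t := le_refl t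
        refine mem_zfStep_of_force hTS hv ?_
        ext y
        constructor
        · rintro ⟨hadj, hyT⟩
          match y with
          | Sum.inl u => exact absurd trivial hyT
          | Sum.inr ⟨ri, rj⟩ =>
            obtain ⟨h1, h2⟩ := hadj
            have h1' : qi = ri := h1
            subst h1'
            have h2' : t + 1 = (rj : ℕ) ∨ (rj : ℕ) + 1 = t := h2
            have hr2 : ¬ ((rj : ℕ) ≤ t) := hyT
            have hrq : rj = qj := Fin.ext (show (rj : ℕ) = (qj : ℕ) by omega)
            subst hrq
            rfl
        · rintro rfl
          refine ⟨⟨rfl, Or.inl (show t + 1 = (qj : ℕ) by omega)⟩,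
            show ¬ ((qj : ℕ) ≤ t) by omega⟩
  -- S₀ is a forcing set
  have hforce : IsForcingSet G S₀ := by
    refine ⟨Finset.univ.sup (fun i : Fin k => n i - 2), ?_⟩
    have hiter : ∀ t, T t ⊆ (zfStep G)^[t] S₀ := by
      intro t
      induction t with
      | zero =>
        intro x hx
        match x with
        | Sum.inl () => exact Set.mem_insert _ _
        | Sum.inr ⟨qi, qj⟩ =>
          have h0 : (qj : ℕ) ≤ 0 := hx
          have hq0 : qj = ⟨0, by have := hn qi; omega⟩ :=
            Fin.ext (show (qj : ℕ) = 0 by omega)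
          rw [hq0]
          exact Set.mem_insert_iff.mpr (Or.inr ⟨qi, rfl⟩)
      | succ t ih =>
        rw [Function.iterate_succ_apply']
        exact hstep t _ ih
    apply Set.eq_univ_of_univ_subset
    intro x _
    apply hiter (Finset.univ.sup (fun i : Fin k => n i - 2))
    match x with
    | Sum.inl u => trivial
    | Sum.inr ⟨qi, qj⟩ =>
      exact le_trans (show (qj : ℕ) ≤ n qi - 2 by have := qj.isLt; omega)
        (Finset.le_sup (f := fun i : Fin k => n i - 2) (Finset.mem_univ qi))
  -- S₀ induces a connected subgraph
  have hhub : (Sum.inl () : W) ∈ S₀ := Set.mem_insert _ _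
  have hconn : (G.induce S₀).Connected := by
    rw [connected_iff]
    refine ⟨?_, ⟨⟨Sum.inl (), hhub⟩⟩⟩
    have key : ∀ x : S₀, (G.induce S₀).Reachable x ⟨Sum.inl (), hhub⟩ := by
      rintro ⟨x, hx⟩
      rcases Set.mem_insert_iff.mp hx with h | ⟨i, rfl⟩
      · have : (⟨x, hx⟩ : S₀) = ⟨Sum.inl (), hhub⟩ := Subtype.ext h
        rw [this]
      · apply Adj.reachable
        show G.Adj (f0 i) (Sum.inl ())
        exact Or.inl rfl
    intro a b
    exact (key a).trans (key b).symm
  -- cardinality of S₀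
  have hinj0 : Function.Injective f0 := by
    intro a b hab
    simp only [hf0] at hab
    injection hab with h
    exact congrArg Sigma.fst h
  have hrange0 : (Set.range f0).ncard = k := by
    rw [← Set.image_univ, Set.ncard_image_of_injective _ hinj0, Set.ncard_univ,
      Nat.card_eq_fintype_card, Fintype.card_fin]
  have hnotmem0 : (Sum.inl () : W) ∉ Set.range f0 := by
    rintro ⟨i, h⟩
    exact Sum.inr_ne_inl h
  have hcard : S₀.ncard = k + 1 := by
    rw [hS₀, Set.ncard_insert_of_notMem hnotmem0 (Set.toFinite _), hrange0]
  -- lower bound: every connected forcing set has at least k+1 elements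
  have hlower : ∀ S : Set W, IsConnForcingSet G S → k + 1 ≤ S.ncard := by
    rintro S ⟨hfs, hconnS⟩
    -- every cycle must contain a vertex of S
    have hhit : ∀ i : Fin k, ∃ j, (Sum.inr ⟨i, j⟩ : W) ∈ S := by
      intro i
      by_contra hno
      push_neg at hno
      have hinv : ∀ t, ∀ j, (Sum.inr ⟨i, j⟩ : W) ∉ (zfStep G)^[t] S := by
        intro t
        induction t with
        | zero => exact hno
        | succ t ih =>
          rw [Function.iterate_succ_apply']
          rintro j (hj | ⟨v, hv, hnb⟩)
          · exact ih j hj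
          · match v with
            | Sum.inl u =>
              have he0 : (Sum.inr ⟨i, ⟨0, by have := hn i; omega⟩⟩ : W)
                  ∈ G.neighborSet (Sum.inl u) \ (zfStep G)^[t] S :=
                ⟨Or.inl rfl, ih _⟩
              have he1 : (Sum.inr ⟨i, ⟨n i - 2, by have := hn i; omega⟩⟩ : W)
                  ∈ G.neighborSet (Sum.inl u) \ (zfStep G)^[t] S :=
                ⟨Or.inr rfl, ih _⟩
              rw [hnb] at he0 he1
              have : (Sum.inr ⟨i, ⟨0, by have := hn i; omega⟩⟩ : W)
                  = Sum.inr ⟨i, ⟨n i - 2, by have := hn i; omega⟩⟩ := he0.trans he1.symm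
              have h0eq : (0 : ℕ) = n i - 2 := by
                injection this with h
                exact congrArg (fun s : (Σ j : Fin k, Fin (n j - 1)) => (s.2 : ℕ)) h
              have := hn i
              omega
            | Sum.inr p =>
              have hmem : (Sum.inr ⟨i, j⟩ : W)
                  ∈ G.neighborSet (Sum.inr p) \ (zfStep G)^[t] S := by
                rw [hnb]; exact rfl
              obtain ⟨pi, pj⟩ := p
              have h1 : pi = i := hmem.1.1
              subst h1
              exact ih pj hv
      obtain ⟨m, hm⟩ := hfs
      have hmemu : (Sum.inr ⟨i, ⟨0, by have := hn i; omega⟩⟩ : W) ∈ (zfStep G)^[m] S := by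
        rw [hm]; exact Set.mem_univ _
      exact hinv m _ hmemu
    choose f hf using hhit
    set g : Fin k → W := fun i => Sum.inr ⟨i, f i⟩ with hg
    have hginj : Function.Injective g := by
      intro a b hab
      simp only [hg] at hab
      injection hab with h
      exact congrArg Sigma.fst h
    have hgsub : Set.range g ⊆ S := by
      rintro _ ⟨i, rfl⟩
      exact hf i
    -- the hub must be in S, else S is not connected
    have hinl : (Sum.inl () : W) ∈ S := by
      by_contra hinlS
      set idx : W → Option (Fin k) := Sum.elim (fun _ => none) (fun p => some p.1)
        with hidx
      have hadj_idx : ∀ x y : W, G.Adj x y → x ∈ S → y ∈ S → idx x = idx y := by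
        intro x y hxy hxS hyS
        match x, y with
        | Sum.inl u, _ => cases u; exact absurd hxS hinlS
        | Sum.inr p, Sum.inl u => cases u; exact absurd hyS hinlS
        | Sum.inr p, Sum.inr q => exact congrArg some hxy.1
      have hwalk : ∀ (a b : ↥S), (G.induce S).Reachable a b → idx a.1 = idx b.1 := by
        intro a b hr
        obtain ⟨w⟩ := hr
        induction w with
        | nil => rfl
        | @cons u v c h p ih => exact (hadj_idx u.1 v.1 h u.2 v.2).trans ih
      have h01 : (⟨0, by omega⟩ : Fin k) ≠ ⟨1, by omega⟩ := by
        intro h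
        exact absurd (show (0 : ℕ) = 1 from congrArg Fin.val h) (by decide)
      have := hwalk ⟨g ⟨0, by omega⟩, hf _⟩ ⟨g ⟨1, by omega⟩, hf _⟩
        (hconnS.preconnected _ _)
      simp only [hg, hidx, Sum.elim_inr, Option.some.injEq] at this
      exact h01 this
    have hsub : insert (Sum.inl ()) (Set.range g) ⊆ S :=
      Set.insert_subset hinl hgsub
    have hnm : (Sum.inl () : W) ∉ Set.range g := by
      rintro ⟨i, h⟩
      exact Sum.inr_ne_inl h
    have hrg : (Set.range g).ncard = k := by
      rw [← Set.image_univ, Set.ncard_image_of_injective _ hginj, Set.ncard_univ,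
        Nat.card_eq_fintype_card, Fintype.card_fin]
    calc k + 1 = (insert (Sum.inl ()) (Set.range g)).ncard := by
          rw [Set.ncard_insert_of_notMem hnm (Set.toFinite _), hrg]
      _ ≤ S.ncard := Set.ncard_le_ncard hsub (Set.toFinite _)
  -- conclude
  have hmem : k + 1 ∈ Set.ncard '' {S : Set W | IsConnForcingSet G S} :=
    ⟨S₀, ⟨hforce, hconn⟩, hcard⟩
  apply le_antisymm
  · exact Nat.sInf_le hmem
  · apply le_csInf ⟨k + 1, hmem⟩
    rintro m ⟨S, hS, rfl⟩
    exact hlower S hS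
end
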